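/- Let T > 0, d > 0, g, h ∈ C([0,T]) with g(0) ≤ h(0) and g(t) < h(t) for t ∈ (0,T]. Let P ∈ C(ℝ²) ∩ L^∞(ℝ²) be nonnegative with P(x,x) > 0 for a.e. x. Let D_T = {(t,x) : t ∈ (0,T], g(t) < x < h(t)}, φ, φ_t ∈ C(closure of D_T), c ∈ L^∞(D_T), and suppose φ_t ≥ d ∫_{g(t)}^{h(t)} P(x,y)φ(t,y) dy + c(t,x)φ in D_T, φ(t, g(t)) ≥ 0 on the set of times where g strictly decreases from the left, φ(t, h(t)) ≥ 0 on the set of times where h strictly increases from the left, and φ(0,x) ≥ 0 on [g(0), h(0)]. Then φ ≥ 0 on the closure of D_T. -/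

import Mathlib

open MeasureTheory

private lemma aux_mono {u : ℝ → ℝ} {a b e : ℝ} (hab : a ≤ b)
    (hc : ContinuousOn u (Set.Icc a b))
    (hder : ∀ s ∈ Set.Ioo a b, ∃ u', HasDerivAt u u' s ∧ e ≤ u') :
    u a + e * (b - a) ≤ u b := by
  have hmono : MonotoneOn (fun s => u s - e * s) (Set.Icc a b) := by
    apply monotoneOn_of_deriv_nonneg (convex_Icc a b)
    · exact hc.sub ((continuous_const.mul continuous_id).continuousOn)
    · intro s hs
      rw [interior_Icc] at hs
      obtain ⟨u', hu', _⟩ := hder s hs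
      exact ((hu'.sub ((hasDerivAt_id s).const_mul e)).differentiableAt).differentiableWithinAt
    · intro s hs
      rw [interior_Icc] at hs
      obtain ⟨u', hu', hu'e⟩ := hder s hs
      have hD : HasDerivAt (fun s => u s - e * s) (u' - e * 1) s :=
        hu'.sub ((hasDerivAt_id s).const_mul e)
      rw [hD.deriv]
      linarith
  have h2 := hmono (Set.left_mem_Icc.2 hab) (Set.right_mem_Icc.2 hab) hab
  simp only at h2
  linarith

private lemma aux_cross {f : ℝ → ℝ} (hf : Continuous f) {s0 t1 x : ℝ} (hs0t : s0 ≤ t1)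
    (h0 : x < f s0) (h1 : f t1 ≤ x) :
    ∃ β, s0 < β ∧ β ≤ t1 ∧ f β = x ∧ ∀ s, s0 ≤ s → s < β → x < f s := by
  set A := {s ∈ Set.Icc s0 t1 | f s ≤ x} with hA
  have hAclosed : IsClosed A := by
    have : A = Set.Icc s0 t1 ∩ f ⁻¹' (Set.Iic x) := rfl
    rw [this]
    exact isClosed_Icc.inter (isClosed_Iic.preimage hf)
  have hAne : A.Nonempty := ⟨t1, ⟨hs0t, le_refl _⟩, h1⟩
  have hAbdd : BddBelow A := ⟨s0, fun a ha => ha.1.1⟩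
  set β := sInf A with hβ
  have hβA : β ∈ A := hAclosed.csInf_mem hAne hAbdd
  have hlb : ∀ s, s0 ≤ s → s < β → x < f s := by
    intro s hs1 hs2
    by_contra hcon
    push_neg at hcon
    have : s ∈ A := ⟨⟨hs1, le_trans hs2.le hβA.1.2⟩, hcon⟩
    exact absurd (csInf_le hAbdd this) (not_le.2 hs2)
  have hs0β : s0 < β := by
    rcases lt_or_eq_of_le hβA.1.1 with h | h
    · exact h
    · exfalso; rw [← h] at hβA; exact absurd hβA.2 (not_le.2 h0)
  refine ⟨β, hs0β, hβA.1.2, ?_, hlb⟩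
  refine le_antisymm hβA.2 ?_
  by_contra hlt
  push_neg at hlt
  obtain ⟨θ, hθ, hball⟩ := Metric.continuous_iff.1 hf β (x - f β) (by linarith)
  set s := max s0 (β - θ/2) with hs
  have hs1 : s0 ≤ s := le_max_left _ _
  have hs2 : s < β := max_lt hs0β (by linarith)
  have hds : dist s β < θ := by
    rw [Real.dist_eq, abs_of_nonpos (by linarith)]
    have : β - θ/2 ≤ s := le_max_right _ _
    linarith
  have hb2 := hball s hds
  rw [Real.dist_eq] at hb2
  have h3 : f s < x := by
    cases' abs_lt.1 hb2 with hl hr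
    linarith
  exact absurd (hlb s hs1 hs2) (not_lt.2 h3.le)

set_option maxHeartbeats 1600000

/-- Maximum principle for a nonlocal evolution inequality on a moving domain: if
`φ_t ≥ d ∫_{g(t)}^{h(t)} P(x,y) φ(t,y) dy + c(t,x) φ(t,x)` in
`D_T = {(t,x) : 0 < t ≤ T, g(t) < x < h(t)}`, with `φ ≥ 0` initially, on the moving
boundary points where `g` strictly decreases (resp. `h` strictly increases) from the left,
then `φ ≥ 0` on the closure of `D_T`. -/
theorem stmt16 (T d : ℝ) (hT : 0 < T) (hd : 0 < d)
    (g h : ℝ → ℝ) (hgc : ContinuousOn g (Set.Icc 0 T)) (hhc : ContinuousOn h (Set.Icc 0 T))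
    (hgh0 : g 0 ≤ h 0) (hgh : ∀ t ∈ Set.Ioc (0:ℝ) T, g t < h t)
    (P : ℝ × ℝ → ℝ) (hPc : Continuous P) (hPb : ∃ MP, ∀ p, |P p| ≤ MP)
    (hPnn : ∀ p, 0 ≤ P p)
    (hPdiag : ∀ᵐ x ∂(volume : Measure ℝ), 0 < P (x, x))
    (φ φt c : ℝ × ℝ → ℝ)
    (hφc : ContinuousOn φ
      {p : ℝ × ℝ | p.1 ∈ Set.Icc 0 T ∧ p.2 ∈ Set.Icc (g p.1) (h p.1)})
    (hφtc : ContinuousOn φt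
      {p : ℝ × ℝ | p.1 ∈ Set.Icc 0 T ∧ p.2 ∈ Set.Icc (g p.1) (h p.1)})
    (hderiv : ∀ t ∈ Set.Ioc (0:ℝ) T, ∀ x ∈ Set.Ioo (g t) (h t),
      HasDerivAt (fun s => φ (s, x)) (φt (t, x)) t)
    (hcb : ∃ Mc, ∀ t ∈ Set.Ioc (0:ℝ) T, ∀ x ∈ Set.Ioo (g t) (h t), |c (t, x)| ≤ Mc)
    (hineq : ∀ t ∈ Set.Ioc (0:ℝ) T, ∀ x ∈ Set.Ioo (g t) (h t),
      d * (∫ y in Set.Ioo (g t) (h t), P (x, y) * φ (t, y)) + c (t, x) * φ (t, x) ≤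
        φt (t, x))
    (hbg : ∀ t ∈ Set.Ioc (0:ℝ) T,
      (∃ ε > (0:ℝ), ∀ s ∈ Set.Ico (t - ε) t, g t < g s) → 0 ≤ φ (t, g t))
    (hbh : ∀ t ∈ Set.Ioc (0:ℝ) T,
      (∃ ε > (0:ℝ), ∀ s ∈ Set.Ico (t - ε) t, h s < h t) → 0 ≤ φ (t, h t))
    (hinit : ∀ x ∈ Set.Icc (g 0) (h 0), 0 ≤ φ (0, x)) :
    ∀ t ∈ Set.Icc (0:ℝ) T, ∀ x ∈ Set.Icc (g t) (h t), 0 ≤ φ (t, x) := by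
  classical
  -- continuous extensions of g and h to all of ℝ
  have hproj : ∀ s : ℝ, min (max s 0) T ∈ Set.Icc 0 T :=
    fun s => ⟨le_min (le_max_right s 0) hT.le, min_le_right _ _⟩
  set G : ℝ → ℝ := fun s => g (min (max s 0) T) with hGdef
  set H : ℝ → ℝ := fun s => h (min (max s 0) T) with hHdef
  have hGcont : Continuous G := by
    rw [hGdef]
    exact hgc.comp_continuous ((continuous_id.max continuous_const).min continuous_const) hproj
  have hHcont : Continuous H := by
    rw [hHdef]
    exact hhc.comp_continuous ((continuous_id.max continuous_const).min continuous_const) hproj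
  have hGg : ∀ s, 0 ≤ s → s ≤ T → G s = g s := by
    intro s h1 h2
    simp only [hGdef]
    rw [max_eq_left h1, min_eq_left h2]
  have hHh : ∀ s, 0 ≤ s → s ≤ T → H s = h s := by
    intro s h1 h2
    simp only [hHdef]
    rw [max_eq_left h1, min_eq_left h2]
  -- the closed region K
  set K : Set (ℝ × ℝ) := {p : ℝ × ℝ | 0 ≤ p.1 ∧ p.1 ≤ T ∧ G p.1 ≤ p.2 ∧ p.2 ≤ H p.1}
    with hKdef
  clear_value G H
  have hKclosed : IsClosed K := by
    have hexpr : K = {p : ℝ × ℝ | 0 ≤ p.1} ∩ ({p | p.1 ≤ T} ∩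
        ({p | G p.1 ≤ p.2} ∩ {p | p.2 ≤ H p.1})) := rfl
    rw [hexpr]
    exact (isClosed_le continuous_const continuous_fst).inter
      ((isClosed_le continuous_fst continuous_const).inter
        ((isClosed_le (hGcont.comp continuous_fst) continuous_snd).inter
          (isClosed_le continuous_snd (hHcont.comp continuous_fst))))
  obtain ⟨Av, hAv⟩ := (isCompact_Icc.image hGcont).bddBelow
  obtain ⟨Bv, hBv⟩ := (isCompact_Icc.image hHcont).bddAbove
  have hAv' : ∀ s, 0 ≤ s → s ≤ T → Av ≤ g s := by
    intro s h1 h2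
    have h3 := hAv (Set.mem_image_of_mem G (⟨h1, h2⟩ : s ∈ Set.Icc 0 T))
    rwa [hGg s h1 h2] at h3
  have hBv' : ∀ s, 0 ≤ s → s ≤ T → h s ≤ Bv := by
    intro s h1 h2
    have h3 := hBv (Set.mem_image_of_mem H (⟨h1, h2⟩ : s ∈ Set.Icc 0 T))
    rwa [hHh s h1 h2] at h3
  have hsub : K ⊆ Set.Icc 0 T ×ˢ Set.Icc Av Bv := by
    rintro ⟨t, x⟩ ⟨h1, h2, h3, h4⟩
    rw [hGg t h1 h2] at h3
    rw [hHh t h1 h2] at h4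
    exact ⟨⟨h1, h2⟩, ⟨le_trans (hAv' t h1 h2) h3, le_trans h4 (hBv' t h1 h2)⟩⟩
  have hKcomp : IsCompact K :=
    (isCompact_Icc.prod isCompact_Icc).of_isClosed_subset hKclosed hsub
  have hKne : K.Nonempty := by
    refine ⟨(0, g 0), ⟨le_refl 0, hT.le, ?_, ?_⟩⟩
    · rw [hGg 0 le_rfl hT.le]
    · rw [hHh 0 le_rfl hT.le]; exact hgh0
  clear_value K
  have hsetK : {p : ℝ × ℝ | p.1 ∈ Set.Icc 0 T ∧ p.2 ∈ Set.Icc (g p.1) (h p.1)} = K := by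
    ext p
    simp only [Set.mem_setOf_eq, Set.mem_Icc, hKdef]
    constructor
    · rintro ⟨⟨h1, h2⟩, h3, h4⟩
      refine ⟨h1, h2, ?_, ?_⟩
      · rw [hGg _ h1 h2]; exact h3
      · rw [hHh _ h1 h2]; exact h4
    · rintro ⟨h1, h2, h3, h4⟩
      rw [hGg _ h1 h2] at h3
      rw [hHh _ h1 h2] at h4
      exact ⟨⟨h1, h2⟩, h3, h4⟩
  have hφcK : ContinuousOn φ K := hsetK ▸ hφc
  have hmemK : ∀ t x, 0 ≤ t → t ≤ T → g t ≤ x → x ≤ h t → ((t, x) : ℝ × ℝ) ∈ K := by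
    intro t x h1 h2 h3 h4
    simp only [hKdef, Set.mem_setOf_eq]
    refine ⟨h1, h2, ?_, ?_⟩
    · rw [hGg t h1 h2]; exact h3
    · rw [hHh t h1 h2]; exact h4
  have hKprop : ∀ q : ℝ × ℝ, q ∈ K → 0 ≤ q.1 ∧ q.1 ≤ T ∧ g q.1 ≤ q.2 ∧ q.2 ≤ h q.1 := by
    rintro ⟨t, x⟩ hq
    simp only [hKdef, Set.mem_setOf_eq] at hq
    obtain ⟨h1, h2, h3, h4⟩ := hq
    rw [hGg t h1 h2] at h3
    rw [hHh t h1 h2] at h4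
    exact ⟨h1, h2, h3, h4⟩
  -- bounds and the constant k
  obtain ⟨MP₀, hMP₀⟩ := hPb
  set MP := max MP₀ 0 with hMPdef
  have hMPnn : 0 ≤ MP := le_max_right _ _
  have hMP : ∀ p, |P p| ≤ MP := fun p => le_trans (hMP₀ p) (le_max_left _ _)
  clear_value MP
  obtain ⟨Mc₀, hMc₀⟩ := hcb
  set Mc := max Mc₀ 0 with hMcdef
  have hMc : ∀ t ∈ Set.Ioc (0:ℝ) T, ∀ x ∈ Set.Ioo (g t) (h t), |c (t, x)| ≤ Mc :=
    fun t ht x hx => le_trans (hMc₀ t ht x hx) (le_max_left _ _)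
  clear_value Mc
  set L := Bv - Av with hLdef
  have hLg : ∀ s, 0 ≤ s → s ≤ T → h s - g s ≤ L := by
    intro s h1 h2
    have h3 := hAv' s h1 h2
    have h4 := hBv' s h1 h2
    rw [hLdef]; linarith
  have hL0 : 0 ≤ L := by
    have h1 := hLg 0 le_rfl hT.le
    linarith
  clear_value L
  set k := Mc + 4*d*MP*L + 4 with hkdef
  have hkMc : k - Mc = 4*(d*MP*L) + 4 := by rw [hkdef]; ring
  have hkMc0 : 0 ≤ k - Mc := by rw [hkMc]; positivity
  clear_value k
  -- the function w
  set w : ℝ × ℝ → ℝ := fun p => Real.exp (-(k * p.1)) * φ p with hwdef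
  have hwcont : ContinuousOn w K := by
    rw [hwdef]
    exact ((Real.continuous_exp.comp
      ((continuous_const.mul continuous_fst).neg)).continuousOn).mul hφcK
  clear_value w
  obtain ⟨pm, hpmK, hpmmin⟩ := hKcomp.exists_isMinOn hKne hwcont
  have hpm : ∀ q ∈ K, w pm ≤ w q := fun q hq => hpmmin hq
  rcases le_or_gt 0 (w pm) with hok | hm
  · -- minimum nonnegative: done
    intro t ht x hx
    have hK : ((t, x) : ℝ × ℝ) ∈ K := hmemK t x ht.1 ht.2 hx.1 hx.2
    have h1 : 0 ≤ w (t, x) := le_trans hok (hpm _ hK)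
    simp only [hwdef] at h1
    by_contra hφneg
    push_neg at hφneg
    have h2 : Real.exp (-(k * t)) * φ (t, x) < 0 :=
      mul_neg_of_pos_of_neg (Real.exp_pos _) hφneg
    linarith
  · exfalso
    set m := w pm with hmdef
    clear_value m
    set η := -m with hηdef
    have hηpos : 0 < η := by rw [hηdef]; linarith
    clear_value η
    -- key interior derivative bound
    have key : ∀ t x, 0 < t → t ≤ T → g t < x → x < h t → w (t, x) ≤ m/4 →
        η ≤ Real.exp (-(k*t)) * (φt (t, x) - k * φ (t, x)) := by
      intro t x ht0 htT hgx hxh hw4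
      have htI : t ∈ Set.Ioc (0:ℝ) T := ⟨ht0, htT⟩
      have hxI : x ∈ Set.Ioo (g t) (h t) := ⟨hgx, hxh⟩
      set E := Real.exp (k*t) with hEdef
      set E' := Real.exp (-(k*t)) with hE'def
      have hEpos : 0 < E := by rw [hEdef]; exact Real.exp_pos _
      have hE'pos : 0 < E' := by rw [hE'def]; exact Real.exp_pos _
      have hEE' : E * E' = 1 := by
        rw [hEdef, hE'def, ← Real.exp_add]
        have hz : k*t + -(k*t) = 0 := by ring
        rw [hz, Real.exp_zero]
      clear_value E E'
      have hφlb : ∀ y, g t ≤ y → y ≤ h t → E * m ≤ φ (t, y) := by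
        intro y h1 h2
        have h3 := hpm _ (hmemK t y ht0.le htT h1 h2)
        simp only [hwdef] at h3
        rw [← hE'def] at h3
        have h4 : E * m ≤ E * (E' * φ (t, y)) := mul_le_mul_of_nonneg_left h3 hEpos.le
        rw [← mul_assoc, hEE', one_mul] at h4
        exact h4
      have hslicecont : ContinuousOn (fun y => P (x, y) * φ (t, y))
          (Set.Icc (g t) (h t)) := by
        apply ContinuousOn.mul
        · exact (hPc.comp (continuous_const.prodMk continuous_id)).continuousOn
        · apply hφcK.comp ((continuous_const.prodMk continuous_id).continuousOn)
          intro y hy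
          exact hmemK t y ht0.le htT hy.1 hy.2
      have hInt : IntegrableOn (fun y => P (x, y) * φ (t, y))
          (Set.Ioo (g t) (h t)) volume :=
        (hslicecont.integrableOn_Icc).mono_set Set.Ioo_subset_Icc_self
      have hconstInt : IntegrableOn (fun _ : ℝ => MP * (E * m))
          (Set.Ioo (g t) (h t)) volume :=
        integrableOn_const measure_Ioo_lt_top.ne
      have hEm : E * m ≤ 0 := (mul_neg_of_pos_of_neg hEpos hm).le
      have hptw : ∀ y ∈ Set.Ioo (g t) (h t), MP * (E * m) ≤ P (x, y) * φ (t, y) := by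
        intro y hy
        have hP1 : 0 ≤ P (x, y) := hPnn _
        have hP2 : P (x, y) ≤ MP := le_trans (le_abs_self _) (hMP _)
        have hφy := hφlb y hy.1.le hy.2.le
        have h5 : P (x, y) * (E * m) ≤ P (x, y) * φ (t, y) :=
          mul_le_mul_of_nonneg_left hφy hP1
        have h6 : MP * (E * m) ≤ P (x, y) * (E * m) :=
          mul_le_mul_of_nonpos_right hP2 hEm
        linarith
      have hgtht : g t ≤ h t := le_of_lt (lt_trans hgx hxh)
      have hintle : MP * (E*m) * (h t - g t) ≤
          ∫ y in Set.Ioo (g t) (h t), P (x, y) * φ (t, y) := by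
        have h6 := setIntegral_mono_on hconstInt hInt measurableSet_Ioo hptw
        rw [setIntegral_const, Real.volume_real_Ioo_of_le hgtht, smul_eq_mul] at h6
        have h7 : MP * (E*m) * (h t - g t) = (h t - g t) * (MP * (E * m)) := by ring
        rw [h7]
        exact h6
      have hMPEm : MP * (E * m) ≤ 0 := mul_nonpos_of_nonneg_of_nonpos hMPnn hEm
      have hIL : d * (MP * (E*m) * L) ≤
          d * (∫ y in Set.Ioo (g t) (h t), P (x, y) * φ (t, y)) := by
        apply mul_le_mul_of_nonneg_left _ hd.le
        have h7 : MP * (E*m) * L ≤ MP * (E*m) * (h t - g t) :=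
          mul_le_mul_of_nonpos_left (hLg t ht0.le htT) hMPEm
        linarith
      have hw := hineq t htI x hxI
      have hφx : φ (t, x) ≤ E * (m/4) := by
        simp only [hwdef] at hw4
        rw [← hE'def] at hw4
        have h8 : E * (E' * φ (t, x)) ≤ E * (m/4) := mul_le_mul_of_nonneg_left hw4 hEpos.le
        rw [← mul_assoc, hEE', one_mul] at h8
        exact h8
      have hφxneg : φ (t, x) ≤ 0 := le_trans hφx (by nlinarith)
      have hcc := hMc t htI x hxI
      have hcc1 : c (t, x) ≤ Mc := le_trans (le_abs_self _) hcc
      have hstep3 : (k - Mc) * (E * (η/4)) ≤ (k - Mc) * (-φ (t, x)) := by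
        apply mul_le_mul_of_nonneg_left _ hkMc0
        have h9 : E * (η/4) = -(E * (m/4)) := by rw [hηdef]; ring
        rw [h9]
        linarith
      have hfin1 : E * η ≤ φt (t, x) - k * φ (t, x) := by
        have e1 : d*(MP*(E*m)*L) + (k - Mc)*(E*(η/4)) = E * η := by
          rw [hηdef, hkMc]
          ring
        have e2 : (k - Mc) * (-φ (t, x)) ≤ c (t, x) * φ (t, x) - k * φ (t, x) := by
          nlinarith [mul_nonneg (sub_nonneg.2 hcc1) (neg_nonneg.2 hφxneg)]
        linarith
      have hfin2 := mul_le_mul_of_nonneg_left hfin1 hE'pos.le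
      have e3 : E' * (E * η) = η := by rw [← mul_assoc, mul_comm E' E, hEE', one_mul]
      calc η = E' * (E * η) := e3.symm
        _ ≤ E' * (φt (t, x) - k * φ (t, x)) := hfin2
    -- the set S of deeply negative points and its first time τ
    set S := K ∩ w ⁻¹' (Set.Iic (m/2)) with hSdef
    have hSclosed : IsClosed S := hwcont.preimage_isClosed_of_isClosed hKclosed isClosed_Iic
    have hScomp : IsCompact S := hKcomp.of_isClosed_subset hSclosed Set.inter_subset_left
    have hSne : S.Nonempty := by
      refine ⟨pm, hpmK, ?_⟩
      simp only [Set.mem_preimage, Set.mem_Iic]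
      rw [← hmdef]
      linarith
    obtain ⟨⟨τ, ξ⟩, hq0S, hq0min⟩ := hScomp.exists_isMinOn hSne continuous_fst.continuousOn
    have hτmin : ∀ q ∈ S, τ ≤ q.1 := fun q hq => hq0min hq
    have hτξK : ((τ, ξ) : ℝ × ℝ) ∈ K := hq0S.1
    have hwτξ : w (τ, ξ) ≤ m/2 := hq0S.2
    obtain ⟨hτ0', hτT', hgτξ', hξhτ'⟩ := hKprop _ hτξK
    have hτ0 : 0 ≤ τ := hτ0'
    have hτT : τ ≤ T := hτT'
    have hgτξ : g τ ≤ ξ := hgτξ'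
    have hξhτ : ξ ≤ h τ := hξhτ'
    have hτpos : 0 < τ := by
      rcases lt_or_eq_of_le hτ0 with hpos | heq
      · exact hpos
      · exfalso
        have heq' : τ = 0 := heq.symm
        have h1 : g 0 ≤ ξ := by rw [← heq']; exact hgτξ
        have h2 : ξ ≤ h 0 := by rw [← heq']; exact hξhτ
        have h3 : 0 ≤ φ (0, ξ) := hinit ξ ⟨h1, h2⟩
        have h4 : w (τ, ξ) = φ (0, ξ) := by
          rw [heq']
          simp only [hwdef]
          norm_num
        linarith
    -- nearby points of K are deeply negative
    have hcwτξ := hwcont _ hτξK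
    obtain ⟨δ₁, hδ₁pos, hδ₁⟩ := Metric.continuousWithinAt_iff.1 hcwτξ (-m/4) (by linarith)
    have hbox : ∀ q ∈ K, dist q ((τ, ξ) : ℝ × ℝ) < δ₁ → w q < m/4 := by
      intro q hq hdq
      have h1 := hδ₁ hq hdq
      rw [Real.dist_eq] at h1
      have h2 := (abs_lt.1 h1).2
      linarith
    -- strict negativity before time τ
    have hbefore : ∀ q : ℝ × ℝ, q ∈ K → q.1 < τ → m/2 < w q := by
      intro q hq hq1
      by_contra hle
      push_neg at hle
      have : q ∈ S := ⟨hq, hle⟩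
      exact absurd (hτmin q this) (not_le.2 hq1)
    by_cases hcase : ξ < h τ
    · -- the minimizer is away from the right boundary
      have hHτξ : ξ < H τ := by rw [hHh τ hτ0 hτT]; exact hcase
      obtain ⟨δ₃, hδ₃pos, hδ₃⟩ := Metric.continuous_iff.1 hHcont τ ((H τ - ξ)/2) (by linarith)
      set ρ := min (min (τ/2) (δ₁/2)) (min (δ₃/2) ((H τ - ξ)/4)) with hρdef
      have hρpos : 0 < ρ := by
        rw [hρdef]
        exact lt_min (lt_min (by linarith) (by linarith)) (lt_min (by linarith) (by linarith))
      have hρτ2 : ρ ≤ τ/2 := by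
        rw [hρdef]; exact le_trans (min_le_left _ _) (min_le_left _ _)
      have hρδ₁ : ρ ≤ δ₁/2 := by
        rw [hρdef]; exact le_trans (min_le_left _ _) (min_le_right _ _)
      have hρδ₃ : ρ ≤ δ₃/2 := by
        rw [hρdef]; exact le_trans (min_le_right _ _) (min_le_left _ _)
      have hρH : ρ ≤ (H τ - ξ)/4 := by
        rw [hρdef]; exact le_trans (min_le_right _ _) (min_le_right _ _)
      clear_value ρ
      have hρτ : ρ < τ := by linarith
      have hτρ0 : 0 < τ - ρ := by linarith
      have hHlow : ∀ s, τ - ρ ≤ s → s ≤ τ → ξ + ρ < H s := by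
        intro s h1 h2
        have hds : dist s τ < δ₃ := by
          rw [Real.dist_eq, abs_of_nonpos (by linarith)]
          linarith
        have h3 := hδ₃ s hds
        rw [Real.dist_eq] at h3
        have h4 := (abs_lt.1 h3).1
        linarith
      have hgle : ∀ x', ξ < x' → x' ≤ ξ + ρ → ∀ s, τ - ρ ≤ s → s ≤ τ → g s ≤ x' := by
        intro x' hx'1 hx'2
        by_contra hcon
        push_neg at hcon
        obtain ⟨s0, hs01, hs02, hs03⟩ := hcon
        have hs00 : 0 ≤ s0 := by linarith
        have hs0T : s0 ≤ T := le_trans hs02 hτT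
        have hs0G : x' < G s0 := by rw [hGg s0 hs00 hs0T]; exact hs03
        have hGτx : G τ ≤ x' := by rw [hGg τ hτ0 hτT]; linarith
        obtain ⟨β, hβ1, hβ2, hβ3, hβ4⟩ := aux_cross hGcont hs02 hs0G hGτx
        have hβ0 : 0 < β := by linarith
        have hβT : β ≤ T := le_trans hβ2 hτT
        have hgβ : g β = x' := by rw [← hGg β hβ0.le hβT]; exact hβ3
        have hSig : ∃ ε > (0:ℝ), ∀ s ∈ Set.Ico (β - ε) β, g β < g s := by
          refine ⟨β - s0, by linarith, fun s hs => ?_⟩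
          have hs0s : s0 ≤ s := by have := hs.1; linarith
          have hsβ : s < β := hs.2
          have h5 := hβ4 s hs0s hsβ
          have hsT : s ≤ T := by linarith
          have hs0' : 0 ≤ s := by linarith
          rw [hgβ, ← hGg s hs0' hsT]
          exact h5
        have hφβ := hbg β ⟨hβ0, hβT⟩ hSig
        have hβτρ : τ - ρ ≤ β := by linarith
        have hhβ : g β ≤ h β := by
          rw [hgβ]
          have h5 := hHlow β hβτρ hβ2
          rw [hHh β hβ0.le hβT] at h5
          linarith
        have hqK : ((β, g β) : ℝ × ℝ) ∈ K := hmemK β (g β) hβ0.le hβT le_rfl hhβ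
        have hwq : 0 ≤ w (β, g β) := by
          simp only [hwdef]
          exact mul_nonneg (Real.exp_pos _).le hφβ
        have hdq : dist ((β, g β) : ℝ × ℝ) ((τ, ξ) : ℝ × ℝ) < δ₁ := by
          rw [Prod.dist_eq]
          apply max_lt
          · show dist β τ < δ₁
            rw [Real.dist_eq, abs_of_nonpos (by linarith)]
            linarith
          · show dist (g β) ξ < δ₁
            rw [Real.dist_eq, hgβ, abs_of_nonneg (by linarith)]
            linarith
        have := hbox _ hqK hdq
        linarith
      have htrajy : ∀ y, ξ < y → y ≤ ξ + ρ → ∀ s, τ - ρ ≤ s → s ≤ τ →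
          ((s, y) : ℝ × ℝ) ∈ K ∧ g s < y ∧ y < h s := by
        intro y hy1 hy2 s h1 h2
        have hs0 : 0 ≤ s := by linarith
        have hsT : s ≤ T := le_trans h2 hτT
        have hgs : g s < y := by
          have h3 := hgle ((ξ + y)/2) (by linarith) (by linarith) s h1 h2
          linarith
        have hhs : y < h s := by
          have h3 := hHlow s h1 h2
          rw [hHh s hs0 hsT] at h3
          linarith
        exact ⟨hmemK s y hs0 hsT hgs.le hhs.le, hgs, hhs⟩
      have hFTC : ∀ y, ξ < y → y ≤ ξ + ρ → w (τ - ρ, y) + η * ρ ≤ w (τ, y) := by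
        intro y hy1 hy2
        have hucont : ContinuousOn (fun s => w (s, y)) (Set.Icc (τ-ρ) τ) := by
          simp only [hwdef]
          apply ContinuousOn.mul
          · exact (Real.continuous_exp.comp
              ((continuous_const.mul continuous_id).neg)).continuousOn
          · apply hφcK.comp ((continuous_id.prodMk continuous_const).continuousOn)
            intro s hs
            exact (htrajy y hy1 hy2 s hs.1 hs.2).1
        have hder : ∀ s ∈ Set.Ioo (τ-ρ) τ, ∃ u',
            HasDerivAt (fun s => w (s, y)) u' s ∧ η ≤ u' := by
          intro s hs
          obtain ⟨hsK, hgs, hhs⟩ := htrajy y hy1 hy2 s hs.1.le hs.2.le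
          have hs0 : 0 < s := by linarith [hs.1]
          have hsT : s ≤ T := le_trans hs.2.le hτT
          have hφd := hderiv s ⟨hs0, hsT⟩ y ⟨hgs, hhs⟩
          have hexp : HasDerivAt (fun s : ℝ => Real.exp (-(k * s)))
              (Real.exp (-(k * s)) * (-(k * 1))) s :=
            (((hasDerivAt_id s).const_mul k).neg).exp
          have hprod : HasDerivAt (fun s => Real.exp (-(k * s)) * φ (s, y)) _ s := hexp.mul hφd
          refine ⟨Real.exp (-(k*s)) * (φt (s, y) - k * φ (s, y)), ?_, ?_⟩
          · have heqfun : (fun s => w (s, y)) = fun s => Real.exp (-(k * s)) * φ (s, y) := by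
              funext s'
              simp only [hwdef]
            rw [heqfun]
            convert hprod using 1
            ring
          · apply key s y hs0 hsT hgs hhs
            have h4 : dist ((s, y) : ℝ × ℝ) ((τ, ξ) : ℝ × ℝ) < δ₁ := by
              rw [Prod.dist_eq]
              apply max_lt
              · show dist s τ < δ₁
                rw [Real.dist_eq, abs_of_nonpos (by linarith [hs.2])]
                linarith [hs.1]
              · show dist y ξ < δ₁
                rw [Real.dist_eq, abs_of_nonneg (by linarith)]
                linarith
            exact (hbox _ hsK h4).le
        have h5 := aux_mono (by linarith : τ - ρ ≤ τ) hucont hder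
        have h6 : τ - (τ - ρ) = ρ := by ring
        rw [h6] at h5
        exact h5
      obtain ⟨δ₄, hδ₄pos, hδ₄⟩ := Metric.continuousWithinAt_iff.1 hcwτξ (η*ρ) (by positivity)
      set y := ξ + min (min ρ (δ₄/2)) ((H τ - ξ)/2) with hydef
      have hymin : 0 < min (min ρ (δ₄/2)) ((H τ - ξ)/2) :=
        lt_min (lt_min hρpos (by linarith)) (by linarith)
      clear_value y
      have hy1 : ξ < y := by rw [hydef]; linarith
      have hy2 : y ≤ ξ + ρ := by
        rw [hydef]
        have h7 : min (min ρ (δ₄/2)) ((H τ - ξ)/2) ≤ ρ :=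
          le_trans (min_le_left _ _) (min_le_left _ _)
        linarith
      have hyδ₄ : y - ξ < δ₄ := by
        rw [hydef]
        have h7 : min (min ρ (δ₄/2)) ((H τ - ξ)/2) ≤ δ₄/2 :=
          le_trans (min_le_left _ _) (min_le_right _ _)
        linarith
      have hyHτ : y < H τ := by
        rw [hydef]
        have h7 := min_le_right (min ρ (δ₄/2)) ((H τ - ξ)/2)
        linarith
      have hyK : ((τ, y) : ℝ × ℝ) ∈ K := by
        apply hmemK τ y hτ0 hτT (by linarith)
        rw [← hHh τ hτ0 hτT]
        linarith
      have hyd : dist ((τ, y) : ℝ × ℝ) ((τ, ξ) : ℝ × ℝ) < δ₄ := by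
        rw [Prod.dist_eq]
        apply max_lt
        · show dist τ τ < δ₄
          rw [dist_self]
          exact hδ₄pos
        · show dist y ξ < δ₄
          rw [Real.dist_eq, abs_of_nonneg (by linarith)]
          exact hyδ₄
      have h8 := hδ₄ hyK hyd
      rw [Real.dist_eq] at h8
      have h9 : w (τ, y) < m/2 + η*ρ := by
        have h8' := (abs_lt.1 h8).2
        linarith
      have h10 := (htrajy y hy1 hy2 (τ-ρ) le_rfl (by linarith)).1
      have h11 : m/2 < w (τ - ρ, y) := hbefore _ h10 (show (τ - ρ : ℝ) < τ by linarith)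
      have h12 := hFTC y hy1 hy2
      linarith
    · -- the minimizer is on the right boundary: ξ = h τ
      have hξeq : ξ = h τ := le_antisymm hξhτ (not_lt.1 hcase)
      have hgτξlt : g τ < ξ := by rw [hξeq]; exact hgh τ ⟨hτpos, hτT⟩
      have hGτξ : G τ < ξ := by rw [hGg τ hτ0 hτT]; exact hgτξlt
      have hHτξ : H τ = ξ := by rw [hHh τ hτ0 hτT, hξeq]
      obtain ⟨δ₃, hδ₃pos, hδ₃⟩ := Metric.continuous_iff.1 hGcont τ ((ξ - G τ)/2) (by linarith)
      set ρ := min (min (τ/2) (δ₁/2)) (min (δ₃/2) ((ξ - G τ)/4)) with hρdef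
      have hρpos : 0 < ρ := by
        rw [hρdef]
        exact lt_min (lt_min (by linarith) (by linarith)) (lt_min (by linarith) (by linarith))
      have hρτ2 : ρ ≤ τ/2 := by
        rw [hρdef]; exact le_trans (min_le_left _ _) (min_le_left _ _)
      have hρδ₁ : ρ ≤ δ₁/2 := by
        rw [hρdef]; exact le_trans (min_le_left _ _) (min_le_right _ _)
      have hρδ₃ : ρ ≤ δ₃/2 := by
        rw [hρdef]; exact le_trans (min_le_right _ _) (min_le_left _ _)
      have hρG : ρ ≤ (ξ - G τ)/4 := by
        rw [hρdef]; exact le_trans (min_le_right _ _) (min_le_right _ _)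
      clear_value ρ
      have hρτ : ρ < τ := by linarith
      have hτρ0 : 0 < τ - ρ := by linarith
      have hGhigh : ∀ s, τ - ρ ≤ s → s ≤ τ → G s < ξ - ρ := by
        intro s h1 h2
        have hds : dist s τ < δ₃ := by
          rw [Real.dist_eq, abs_of_nonpos (by linarith)]
          linarith
        have h3 := hδ₃ s hds
        rw [Real.dist_eq] at h3
        have h4 := (abs_lt.1 h3).2
        linarith
      have hhge : ∀ x', ξ - ρ ≤ x' → x' < ξ → ∀ s, τ - ρ ≤ s → s ≤ τ → x' ≤ h s := by
        intro x' hx'1 hx'2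
        by_contra hcon
        push_neg at hcon
        obtain ⟨s0, hs01, hs02, hs03⟩ := hcon
        have hs00 : 0 ≤ s0 := by linarith
        have hs0T : s0 ≤ T := le_trans hs02 hτT
        have hs0H : -x' < -H s0 := by
          rw [hHh s0 hs00 hs0T]
          linarith
        have hHτx : -H τ ≤ -x' := by
          rw [hHτξ]
          linarith
        obtain ⟨β, hβ1, hβ2, hβ3, hβ4⟩ := aux_cross hHcont.neg hs02 hs0H hHτx
        have hβ0 : 0 < β := by linarith
        have hβT : β ≤ T := le_trans hβ2 hτT
        have hhβ : h β = x' := by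
          rw [← hHh β hβ0.le hβT]
          linarith [hβ3, Pi.neg_apply H β]
        have hSig : ∃ ε > (0:ℝ), ∀ s ∈ Set.Ico (β - ε) β, h s < h β := by
          refine ⟨β - s0, by linarith, fun s hs => ?_⟩
          have hs0s : s0 ≤ s := by have := hs.1; linarith
          have hsβ : s < β := hs.2
          have h5 := hβ4 s hs0s hsβ
          have hsT : s ≤ T := by linarith
          have hs0' : 0 ≤ s := by linarith
          rw [hhβ, ← hHh s hs0' hsT]
          linarith [Pi.neg_apply H s]
        have hφβ := hbh β ⟨hβ0, hβT⟩ hSig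
        have hβτρ : τ - ρ ≤ β := by linarith
        have hgβ : g β ≤ h β := by
          rw [hhβ]
          have h5 := hGhigh β hβτρ hβ2
          rw [hGg β hβ0.le hβT] at h5
          linarith
        have hqK : ((β, h β) : ℝ × ℝ) ∈ K := hmemK β (h β) hβ0.le hβT hgβ le_rfl
        have hwq : 0 ≤ w (β, h β) := by
          simp only [hwdef]
          exact mul_nonneg (Real.exp_pos _).le hφβ
        have hdq : dist ((β, h β) : ℝ × ℝ) ((τ, ξ) : ℝ × ℝ) < δ₁ := by
          rw [Prod.dist_eq]
          apply max_lt
          · show dist β τ < δ₁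
            rw [Real.dist_eq, abs_of_nonpos (by linarith)]
            linarith
          · show dist (h β) ξ < δ₁
            rw [Real.dist_eq, hhβ, abs_of_nonpos (by linarith)]
            linarith
        have := hbox _ hqK hdq
        linarith
      have htrajy : ∀ y, ξ - ρ ≤ y → y < ξ → ∀ s, τ - ρ ≤ s → s ≤ τ →
          ((s, y) : ℝ × ℝ) ∈ K ∧ g s < y ∧ y < h s := by
        intro y hy1 hy2 s h1 h2
        have hs0 : 0 ≤ s := by linarith
        have hsT : s ≤ T := le_trans h2 hτT
        have hgs : g s < y := by
          have h3 := hGhigh s h1 h2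
          rw [hGg s hs0 hsT] at h3
          linarith
        have hhs : y < h s := by
          have h3 := hhge ((y + ξ)/2) (by linarith) (by linarith) s h1 h2
          linarith
        exact ⟨hmemK s y hs0 hsT hgs.le hhs.le, hgs, hhs⟩
      have hFTC : ∀ y, ξ - ρ ≤ y → y < ξ → w (τ - ρ, y) + η * ρ ≤ w (τ, y) := by
        intro y hy1 hy2
        have hucont : ContinuousOn (fun s => w (s, y)) (Set.Icc (τ-ρ) τ) := by
          simp only [hwdef]
          apply ContinuousOn.mul
          · exact (Real.continuous_exp.comp
              ((continuous_const.mul continuous_id).neg)).continuousOn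
          · apply hφcK.comp ((continuous_id.prodMk continuous_const).continuousOn)
            intro s hs
            exact (htrajy y hy1 hy2 s hs.1 hs.2).1
        have hder : ∀ s ∈ Set.Ioo (τ-ρ) τ, ∃ u',
            HasDerivAt (fun s => w (s, y)) u' s ∧ η ≤ u' := by
          intro s hs
          obtain ⟨hsK, hgs, hhs⟩ := htrajy y hy1 hy2 s hs.1.le hs.2.le
          have hs0 : 0 < s := by linarith [hs.1]
          have hsT : s ≤ T := le_trans hs.2.le hτT
          have hφd := hderiv s ⟨hs0, hsT⟩ y ⟨hgs, hhs⟩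
          have hexp : HasDerivAt (fun s : ℝ => Real.exp (-(k * s)))
              (Real.exp (-(k * s)) * (-(k * 1))) s :=
            (((hasDerivAt_id s).const_mul k).neg).exp
          have hprod : HasDerivAt (fun s => Real.exp (-(k * s)) * φ (s, y)) _ s := hexp.mul hφd
          refine ⟨Real.exp (-(k*s)) * (φt (s, y) - k * φ (s, y)), ?_, ?_⟩
          · have heqfun : (fun s => w (s, y)) = fun s => Real.exp (-(k * s)) * φ (s, y) := by
              funext s'
              simp only [hwdef]
            rw [heqfun]
            convert hprod using 1
            ring
          · apply key s y hs0 hsT hgs hhs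
            have h4 : dist ((s, y) : ℝ × ℝ) ((τ, ξ) : ℝ × ℝ) < δ₁ := by
              rw [Prod.dist_eq]
              apply max_lt
              · show dist s τ < δ₁
                rw [Real.dist_eq, abs_of_nonpos (by linarith [hs.2])]
                linarith [hs.1]
              · show dist y ξ < δ₁
                rw [Real.dist_eq, abs_of_nonpos (by linarith)]
                linarith
            exact (hbox _ hsK h4).le
        have h5 := aux_mono (by linarith : τ - ρ ≤ τ) hucont hder
        have h6 : τ - (τ - ρ) = ρ := by ring
        rw [h6] at h5
        exact h5
      obtain ⟨δ₄, hδ₄pos, hδ₄⟩ := Metric.continuousWithinAt_iff.1 hcwτξ (η*ρ) (by positivity)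
      set y := ξ - min (min ρ (δ₄/2)) ((ξ - G τ)/2) with hydef
      have hymin : 0 < min (min ρ (δ₄/2)) ((ξ - G τ)/2) :=
        lt_min (lt_min hρpos (by linarith)) (by linarith)
      clear_value y
      have hy2 : y < ξ := by rw [hydef]; linarith
      have hy1 : ξ - ρ ≤ y := by
        rw [hydef]
        have h7 : min (min ρ (δ₄/2)) ((ξ - G τ)/2) ≤ ρ :=
          le_trans (min_le_left _ _) (min_le_left _ _)
        linarith
      have hyδ₄ : ξ - y < δ₄ := by
        rw [hydef]
        have h7 : min (min ρ (δ₄/2)) ((ξ - G τ)/2) ≤ δ₄/2 :=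
          le_trans (min_le_left _ _) (min_le_right _ _)
        linarith
      have hyGτ : G τ < y := by
        rw [hydef]
        have h7 := min_le_right (min ρ (δ₄/2)) ((ξ - G τ)/2)
        linarith
      have hyK : ((τ, y) : ℝ × ℝ) ∈ K := by
        apply hmemK τ y hτ0 hτT
        · rw [← hGg τ hτ0 hτT]
          linarith
        · rw [← hξeq]
          linarith
      have hyd : dist ((τ, y) : ℝ × ℝ) ((τ, ξ) : ℝ × ℝ) < δ₄ := by
        rw [Prod.dist_eq]
        apply max_lt
        · show dist τ τ < δ₄
          rw [dist_self]
          exact hδ₄pos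
        · show dist y ξ < δ₄
          rw [Real.dist_eq, abs_of_nonpos (by linarith)]
          linarith
      have h8 := hδ₄ hyK hyd
      rw [Real.dist_eq] at h8
      have h9 : w (τ, y) < m/2 + η*ρ := by
        have h8' := (abs_lt.1 h8).2
        linarith
      have h10 := (htrajy y hy1 hy2 (τ-ρ) le_rfl (by linarith)).1
      have h11 : m/2 < w (τ - ρ, y) := hbefore _ h10 (show (τ - ρ : ℝ) < τ by linarith)
      have h12 := hFTC y hy1 hy2
      linarith
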